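/- Let S be a half-odd-integer and V_j = exp(-iπ S_j) for j = 1,2,3. Then V_1 V_2 V_3 = -1. -/

import Mathlib

open Matrix

namespace PiRotAux

variable {n : ℕ}

/-- exponential of a conjugated diagonal matrix. -/
lemma exp_conj_diag (u v : Matrix (Fin n) (Fin n) ℂ) (d : Fin n → ℂ)
    (huv : u * v = 1) (hvu : v * u = 1) :
    NormedSpace.exp (u * diagonal d * v)
      = u * diagonal (fun i => Complex.exp (d i)) * v := by
  have h := Matrix.exp_units_conj (⟨u, v, huv, hvu⟩ : (Matrix (Fin n) (Fin n) ℂ)ˣ)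
      (diagonal d)
  have h2 : NormedSpace.exp (u * diagonal d * v) = u * NormedSpace.exp (diagonal d) * v := h
  rw [h2, Matrix.exp_diagonal]
  have h3 : NormedSpace.exp d = fun i => Complex.exp (d i) := by
    funext i
    rw [Pi.coe_exp]
    exact (congrFun Complex.exp_eq_exp_ℂ (d i)).symm
  rw [h3]

/-- conjugation helper -/
lemma conj_comm_rel (u v X Y Z : Matrix (Fin n) (Fin n) ℂ)
    (huv : u * v = 1)
    (h : X * Y - Y * X = Z) :
    (v * X * u) * (v * Y * u) - (v * Y * u) * (v * X * u) = v * Z * u := by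
  have e : ∀ P Q : Matrix (Fin n) (Fin n) ℂ,
      (v * P * u) * (v * Q * u) = v * (P * Q) * u := by
    intro P Q
    calc (v * P * u) * (v * Q * u) = v * P * (u * v) * Q * u := by
          simp only [Matrix.mul_assoc]
      _ = v * (P * Q) * u := by rw [huv]; simp only [Matrix.mul_assoc, Matrix.mul_one]
  rw [e, e, ← h]
  simp only [Matrix.sub_mul, Matrix.mul_sub]

/-- If `A = u D v` is diagonalizable and `[A,B] = c • B` then
`exp A * B = exp c • (B * exp A)`. -/
lemma exp_mul_of_bracket (u v B : Matrix (Fin n) (Fin n) ℂ) (d : Fin n → ℂ) (c : ℂ)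
    (huv : u * v = 1) (hvu : v * u = 1)
    (hAB : (u * diagonal d * v) * B - B * (u * diagonal d * v) = c • B) :
    NormedSpace.exp (u * diagonal d * v) * B
      = Complex.exp c • (B * NormedSpace.exp (u * diagonal d * v)) := by
  set T : Matrix (Fin n) (Fin n) ℂ := v * B * u with hT
  have hB : B = u * T * v := by
    rw [hT]
    calc B = (u * v) * B * (u * v) := by rw [huv]; simp
      _ = u * (v * B * u) * v := by simp only [Matrix.mul_assoc]
  have hvAu : v * (u * diagonal d * v) * u = diagonal d := by
    calc v * (u * diagonal d * v) * u = (v * u) * diagonal d * (v * u) := by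
          simp only [Matrix.mul_assoc]
      _ = diagonal d := by rw [hvu]; simp
  have hDT : diagonal d * T - T * diagonal d = c • T := by
    have h := conj_comm_rel u v (u * diagonal d * v) B (c • B) huv hAB
    rw [hvAu] at h
    rw [h, Matrix.mul_smul, Matrix.smul_mul]
  have hentry : ∀ i j, (d i - d j) * T i j = c * T i j := by
    intro i j
    have h := congrFun (congrFun (congrArg (fun (X : Matrix (Fin n) (Fin n) ℂ) => fun i j => X i j) hDT) i) j
    simp only [Matrix.sub_apply, Matrix.diagonal_mul, Matrix.mul_diagonal,
      Matrix.smul_apply, smul_eq_mul] at h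
    rw [sub_mul]
    linear_combination h
  have hkey : diagonal (fun i => Complex.exp (d i)) * T
      = Complex.exp c • (T * diagonal (fun i => Complex.exp (d i))) := by
    ext i j
    simp only [Matrix.diagonal_mul, Matrix.mul_diagonal, Matrix.smul_apply, smul_eq_mul]
    rcases eq_or_ne (T i j) 0 with h0 | h0
    · simp [h0]
    · have hd : d i = c + d j := by
        have h := hentry i j
        have h2 : (d i - d j - c) * T i j = 0 := by linear_combination h
        rcases mul_eq_zero.mp h2 with h1 | h1
        · linear_combination h1
        · exact absurd h1 h0
      rw [hd, Complex.exp_add]; ring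
  rw [exp_conj_diag u v d huv hvu]
  conv_lhs => rw [hB]
  conv_rhs => rw [hB]
  calc u * diagonal (fun i => Complex.exp (d i)) * v * (u * T * v)
      = u * (diagonal (fun i => Complex.exp (d i)) * T) * v := by
        calc u * diagonal (fun i => Complex.exp (d i)) * v * (u * T * v)
            = u * diagonal (fun i => Complex.exp (d i)) * (v * u) * T * v := by
              simp only [Matrix.mul_assoc]
          _ = u * (diagonal (fun i => Complex.exp (d i)) * T) * v := by
              rw [hvu]; simp only [Matrix.mul_one, Matrix.mul_assoc]
    _ = u * (Complex.exp c • (T * diagonal (fun i => Complex.exp (d i)))) * v := by rw [hkey]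
    _ = Complex.exp c • (u * T * v * (u * diagonal (fun i => Complex.exp (d i)) * v)) := by
        rw [Matrix.mul_smul, Matrix.smul_mul]
        congr 1
        calc u * (T * diagonal (fun i => Complex.exp (d i))) * v
            = u * T * (v * u) * diagonal (fun i => Complex.exp (d i)) * v := by
              rw [hvu]; simp only [Matrix.mul_one, Matrix.mul_assoc]
          _ = u * T * v * (u * diagonal (fun i => Complex.exp (d i)) * v) := by
              simp only [Matrix.mul_assoc]

lemma exp_smul_mul_of_bracket (a c : ℂ) (A B : Matrix (Fin n) (Fin n) ℂ)
    (hA : A.IsHermitian) (hAB : A * B - B * A = c • B) :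
    NormedSpace.exp (a • A) * B
      = Complex.exp (a * c) • (B * NormedSpace.exp (a • A)) := by
  set u := (Matrix.IsHermitian.eigenvectorUnitary hA : Matrix (Fin n) (Fin n) ℂ) with hu
  have huv : u * star u = 1 :=
    Matrix.mem_unitaryGroup_iff.mp (Matrix.IsHermitian.eigenvectorUnitary hA).2
  have hvu : star u * u = 1 :=
    Matrix.mem_unitaryGroup_iff'.mp (Matrix.IsHermitian.eigenvectorUnitary hA).2
  have hsp : A = u * diagonal (fun i => ((hA.eigenvalues i : ℝ) : ℂ)) * star u :=
    hA.spectral_theorem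
  have hdiag : diagonal (fun i => a * ((hA.eigenvalues i : ℝ) : ℂ))
      = a • diagonal (fun i => ((hA.eigenvalues i : ℝ) : ℂ)) := by
    rw [← Matrix.diagonal_smul]
    congr 1
  have hsmul : a • A = u * diagonal (fun i => a * ((hA.eigenvalues i : ℝ) : ℂ)) * star u := by
    have h0 := congrArg (fun X => a • X) hsp
    rw [h0, hdiag, Matrix.mul_smul, Matrix.smul_mul]
  have hAB' : (u * diagonal (fun i => a * ((hA.eigenvalues i : ℝ) : ℂ)) * star u) * B
      - B * (u * diagonal (fun i => a * ((hA.eigenvalues i : ℝ) : ℂ)) * star u)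
      = (a * c) • B := by
    rw [← hsmul]
    calc (a • A) * B - B * (a • A) = a • (A * B - B * A) := by
          rw [Matrix.smul_mul, Matrix.mul_smul, smul_sub]
      _ = (a * c) • B := by rw [hAB, smul_smul]
  have h := exp_mul_of_bracket u (star u) B
    (fun i => a * ((hA.eigenvalues i : ℝ) : ℂ)) (a * c) huv hvu hAB'
  rw [← hsmul] at h
  exact h

lemma eigen_half {C : ℂ} (A Sp Sm : Matrix (Fin n) (Fin n) ℂ) (hA : A.IsHermitian)
    (hbr : A * Sp - Sp * A = Sp)
    (hcs : Sm * Sp = C • 1 - A * A - A)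
    (hCq : ∀ μ : ℝ, (μ:ℂ)^2 + μ = C → ∃ m : ℤ, μ = m + 1/2) :
    ∀ i, ∃ m : ℤ, hA.eigenvalues i = m + 1/2 := by
  set u := (Matrix.IsHermitian.eigenvectorUnitary hA : Matrix (Fin n) (Fin n) ℂ) with hu
  have huv : u * star u = 1 :=
    Matrix.mem_unitaryGroup_iff.mp (Matrix.IsHermitian.eigenvectorUnitary hA).2
  have hvu : star u * u = 1 :=
    Matrix.mem_unitaryGroup_iff'.mp (Matrix.IsHermitian.eigenvectorUnitary hA).2
  set dR : Fin n → ℝ := hA.eigenvalues with hdR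
  set dd : Fin n → ℂ := fun i => ((dR i : ℝ) : ℂ) with hdd
  have hsp : A = u * diagonal dd * star u := hA.spectral_theorem
  set T : Matrix (Fin n) (Fin n) ℂ := star u * Sp * u with hT
  set Tm : Matrix (Fin n) (Fin n) ℂ := star u * Sm * u with hTm
  have hvAu : star u * A * u = diagonal dd := by
    rw [hsp]
    calc star u * (u * diagonal dd * star u) * u
        = (star u * u) * diagonal dd * (star u * u) := by simp only [Matrix.mul_assoc]
      _ = diagonal dd := by rw [hvu]; simp
  have hDT : diagonal dd * T - T * diagonal dd = T := by
    have h := conj_comm_rel u (star u) A Sp Sp huv hbr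
    rw [hvAu] at h
    exact h
  have hentry : ∀ i j, T i j ≠ 0 → dR i = dR j + 1 := by
    intro i j h0
    have h := congrFun (congrFun (congrArg
      (fun (X : Matrix (Fin n) (Fin n) ℂ) => fun i j => X i j) hDT) i) j
    simp only [Matrix.sub_apply, Matrix.diagonal_mul, Matrix.mul_diagonal] at h
    have h2 : (dd i - dd j - 1) * T i j = 0 := by linear_combination h
    rcases mul_eq_zero.mp h2 with h1 | h1
    · have h3 : dd i = dd j + 1 := by linear_combination h1
      simp only [hdd] at h3
      exact_mod_cast h3
    · exact absurd h1 h0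
  have hTmT : Tm * T = C • 1 - diagonal dd * diagonal dd - diagonal dd := by
    have e : Tm * T = star u * (Sm * Sp) * u := by
      calc (star u * Sm * u) * (star u * Sp * u)
          = star u * Sm * (u * star u) * Sp * u := by simp only [Matrix.mul_assoc]
        _ = star u * (Sm * Sp) * u := by rw [huv]; simp only [Matrix.mul_one, Matrix.mul_assoc]
    rw [e, hcs]
    have e1 : star u * (C • (1 : Matrix (Fin n) (Fin n) ℂ)) * u = C • 1 := by
      rw [Matrix.mul_smul, Matrix.smul_mul, Matrix.mul_one, hvu]
    have e2 : star u * (A * A) * u = diagonal dd * diagonal dd := by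
      rw [← hvAu]
      calc star u * (A * A) * u = star u * A * (u * star u) * A * u := by
            rw [huv]; simp only [Matrix.mul_one, Matrix.mul_assoc]
        _ = star u * A * u * (star u * A * u) := by simp only [Matrix.mul_assoc]
    rw [Matrix.mul_sub, Matrix.sub_mul, Matrix.mul_sub, Matrix.sub_mul, e1, e2, hvAu]
  have hquad : ∀ i, (∀ j, T j i = 0) → ((dR i : ℂ))^2 + (dR i : ℂ) = C := by
    intro i hcol
    have hL : (Tm * T) i i = 0 := by
      rw [Matrix.mul_apply]
      exact Finset.sum_eq_zero (fun j _ => by rw [hcol j, mul_zero])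
    have hR : (0:ℂ) = C - dd i * dd i - dd i := by
      calc (0:ℂ) = (Tm * T) i i := hL.symm
        _ = (C • 1 - diagonal dd * diagonal dd - diagonal dd) i i := by rw [hTmT]
        _ = C - dd i * dd i - dd i := by
            simp [Matrix.sub_apply, Matrix.smul_apply, Matrix.one_apply_eq,
              Matrix.diagonal_mul_diagonal, Matrix.diagonal_apply_eq, smul_eq_mul]
    simp only [hdd] at hR
    rw [pow_two]
    linear_combination hR
  -- now the finite ladder
  intro i
  set μ : ℝ := dR i with hμ
  have hfin : ∃ N : ℕ, ∀ j, dR j ≠ μ + (N + 1) := by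
    by_contra hcon
    push_neg at hcon
    choose g hg using hcon
    obtain ⟨x, y, hxy, hgxy⟩ := Finite.exists_ne_map_eq_of_infinite g
    apply hxy
    have := (hg x).symm.trans (congrArg dR hgxy |>.trans (hg y))
    have : (x:ℝ) = y := by linarith
    exact_mod_cast this
  set N0 := Nat.find hfin with hN0
  have hnot : ∀ j, dR j ≠ μ + (N0 + 1) := Nat.find_spec hfin
  have hprev : ∃ i', dR i' = μ + N0 := by
    rcases Nat.eq_zero_or_pos N0 with h0 | h0
    · exact ⟨i, by rw [h0]; simp [hμ]⟩
    · obtain ⟨N, hN⟩ := Nat.exists_eq_succ_of_ne_zero h0.ne'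
      have := Nat.find_min hfin (m := N) (by omega)
      push_neg at this
      obtain ⟨j, hj⟩ := this
      refine ⟨j, by rw [hj, hN]; push_cast; ring⟩
  obtain ⟨i', hi'⟩ := hprev
  have hcol : ∀ j, T j i' = 0 := by
    intro j
    by_contra h0
    have := hentry j i' h0
    exact hnot j (by rw [this, hi']; push_cast; ring)
  have hq := hquad i' hcol
  rw [hi'] at hq
  obtain ⟨m, hm⟩ := hCq (μ + N0) hq
  exact ⟨m - N0, by rw [hμ] at hm ⊢; push_cast; push_cast at hm; linarith⟩

end PiRotAux

set_option maxHeartbeats 1000000 in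
open PiRotAux Matrix in
/-- For half-odd-integer spin `S = (2k+1)/2`, the standard spin operators
`S1, S2, S3` on `ℂ^(2S+1)` (Hermitian, su(2) commutation relations, Casimir `S(S+1)`)
satisfy `V1 V2 V3 = -1`, where `Vj = exp (-iπ Sj)`. -/
theorem pi_rotations_product_eq_neg_one (k : ℕ)
    (S1 S2 S3 : Matrix (Fin (2*k+2)) (Fin (2*k+2)) ℂ)
    (h1 : S1.IsHermitian) (h2 : S2.IsHermitian) (h3 : S3.IsHermitian)
    (hc1 : S1 * S2 - S2 * S1 = Complex.I • S3)
    (hc2 : S2 * S3 - S3 * S2 = Complex.I • S1)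
    (hc3 : S3 * S1 - S1 * S3 = Complex.I • S2)
    (hcas : S1 ^ 2 + S2 ^ 2 + S3 ^ 2
      = (((2*(k:ℂ)+1)/2) * ((2*(k:ℂ)+1)/2 + 1)) • (1 : Matrix (Fin (2*k+2)) (Fin (2*k+2)) ℂ)) :
    (NormedSpace.exp ((-(Real.pi : ℂ) * Complex.I) • S1)) *
      (NormedSpace.exp ((-(Real.pi : ℂ) * Complex.I) • S2)) *
      (NormedSpace.exp ((-(Real.pi : ℂ) * Complex.I) • S3)) = -1 := by
  have hI : Complex.I * Complex.I = -1 := Complex.I_mul_I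
  set a : ℂ := -(Real.pi : ℂ) * Complex.I with ha
  set b : ℂ := a / 2 with hb
  set Ccas : ℂ := ((2*(k:ℂ)+1)/2) * ((2*(k:ℂ)+1)/2 + 1) with hCcas
  -- scalar exponential values
  have hexp_a1 : Complex.exp (a * 1) = -1 := by
    rw [mul_one, ha, neg_mul, Complex.exp_neg, Complex.exp_pi_mul_I]
    norm_num
  have hexp_am1 : Complex.exp (a * (-1)) = -1 := by
    rw [ha, show -(Real.pi:ℂ) * Complex.I * (-1) = (Real.pi:ℂ) * Complex.I by ring,
      Complex.exp_pi_mul_I]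
  have hexp_b1 : Complex.exp (b * 1) = -Complex.I := by
    rw [mul_one, hb, ha,
      show -(Real.pi:ℂ) * Complex.I / 2 = -(((Real.pi/2 : ℝ) : ℂ) * Complex.I) by push_cast; ring,
      Complex.exp_neg, Complex.exp_mul_I, ← Complex.ofReal_cos, ← Complex.ofReal_sin,
      Real.cos_pi_div_two, Real.sin_pi_div_two]
    simp [Complex.inv_I]
  have hexp_bm1 : Complex.exp (b * (-1)) = Complex.I := by
    rw [hb, ha,
      show -(Real.pi:ℂ) * Complex.I / 2 * (-1) = (((Real.pi/2 : ℝ) : ℂ) * Complex.I) by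
        push_cast; ring,
      Complex.exp_mul_I, ← Complex.ofReal_cos, ← Complex.ofReal_sin,
      Real.cos_pi_div_two, Real.sin_pi_div_two]
    simp
  -- product reorderings from the commutation relations
  have e12 : S1 * S2 = S2 * S1 + Complex.I • S3 := by rw [← hc1]; abel
  have e23 : S2 * S3 = S3 * S2 + Complex.I • S1 := by rw [← hc2]; abel
  have e31 : S3 * S1 = S1 * S3 + Complex.I • S2 := by rw [← hc3]; abel
  -- ladder operators
  set Sp : Matrix (Fin (2*k+2)) (Fin (2*k+2)) ℂ := S1 + Complex.I • S2 with hSp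
  set Sm : Matrix (Fin (2*k+2)) (Fin (2*k+2)) ℂ := S1 - Complex.I • S2 with hSm
  set Cp : Matrix (Fin (2*k+2)) (Fin (2*k+2)) ℂ := S3 + Complex.I • S1 with hCp
  set Cm : Matrix (Fin (2*k+2)) (Fin (2*k+2)) ℂ := S3 - Complex.I • S1 with hCm
  have hbr_p : S3 * Sp - Sp * S3 = (1:ℂ) • Sp := by
    rw [hSp, mul_add, add_mul, mul_smul_comm, smul_mul_assoc, e31, e23]
    rw [show S3 * S2 = S2 * S3 - Complex.I • S1 by rw [← hc2]; abel]
    match_scalars <;> simp [Complex.I_mul_I] <;> ring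
  have hbr_m : S3 * Sm - Sm * S3 = (-1:ℂ) • Sm := by
    rw [hSm, mul_sub, sub_mul, mul_smul_comm, smul_mul_assoc, e31]
    rw [show S3 * S2 = S2 * S3 - Complex.I • S1 by rw [← hc2]; abel]
    match_scalars <;> simp [Complex.I_mul_I] <;> ring
  have hbr_cp : S2 * Cp - Cp * S2 = (1:ℂ) • Cp := by
    rw [hCp, mul_add, add_mul, mul_smul_comm, smul_mul_assoc, e23, e12]
    rw [show S3 * S2 = S2 * S3 - Complex.I • S1 by rw [← hc2]; abel]
    match_scalars <;> simp [Complex.I_mul_I] <;> ring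
  have hbr_cm : S2 * Cm - Cm * S2 = (-1:ℂ) • Cm := by
    rw [hCm, mul_sub, sub_mul, mul_smul_comm, smul_mul_assoc, e23, e12]
    rw [show S3 * S2 = S2 * S3 - Complex.I • S1 by rw [← hc2]; abel]
    match_scalars <;> simp [Complex.I_mul_I] <;> ring
  -- Casimir identity for the ladder operators
  have hcs : Sm * Sp = Ccas • 1 - S3 * S3 - S3 := by
    have hcas' : S1 * S1 + S2 * S2 + S3 * S3 = Ccas • 1 := by
      rw [← hcas, pow_two, pow_two, pow_two]
    have expand : Sm * Sp = (S1 * S1 + S2 * S2) + (Complex.I • (S1 * S2) - Complex.I • (S2 * S1)) := by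
      rw [hSm, hSp, sub_mul, mul_add, mul_add, mul_smul_comm, mul_smul_comm,
        smul_mul_assoc, smul_mul_assoc, smul_smul, hI]
      match_scalars <;> ring
    rw [expand, e12]
    have h12 : S1 * S1 + S2 * S2 = Ccas • 1 - S3 * S3 := by rw [← hcas']; abel
    rw [h12]
    match_scalars <;> simp [Complex.I_mul_I] <;> ring
  -- quadratic equation for the eigenvalues
  have hCq : ∀ μ : ℝ, (μ:ℂ)^2 + μ = Ccas → ∃ m : ℤ, μ = m + 1/2 := by
    intro μ hμ
    rw [hCcas] at hμ
    have hreal : μ^2 + μ = ((2*(k:ℝ)+1)/2) * ((2*(k:ℝ)+1)/2 + 1) := by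
      have h2 : ((μ^2 + μ : ℝ) : ℂ) = ((((2*(k:ℝ)+1)/2) * ((2*(k:ℝ)+1)/2 + 1) : ℝ) : ℂ) := by
        push_cast
        linear_combination hμ
      exact_mod_cast h2
    have hfac : (μ - (2*(k:ℝ)+1)/2) * (μ + (2*(k:ℝ)+1)/2 + 1) = 0 := by
      linear_combination hreal
    rcases mul_eq_zero.mp hfac with h | h
    · exact ⟨k, by push_cast; linarith⟩
    · exact ⟨-(k:ℤ) - 2, by push_cast; linarith⟩
  -- eigenvalues of S3 are half-odd-integers
  have hbr_p' : S3 * Sp - Sp * S3 = Sp := by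
    conv_rhs => rw [← one_smul ℂ Sp]
    exact hbr_p
  have heig : ∀ i, ∃ m : ℤ, h3.eigenvalues i = m + 1/2 :=
    eigen_half S3 Sp Sm h3 hbr_p' hcs hCq
  -- the six exponentials
  set V1 : Matrix (Fin (2*k+2)) (Fin (2*k+2)) ℂ := NormedSpace.exp (a • S1) with hV1d
  set V2 : Matrix (Fin (2*k+2)) (Fin (2*k+2)) ℂ := NormedSpace.exp (a • S2) with hV2d
  set V3 : Matrix (Fin (2*k+2)) (Fin (2*k+2)) ℂ := NormedSpace.exp (a • S3) with hV3d
  set V3' : Matrix (Fin (2*k+2)) (Fin (2*k+2)) ℂ := NormedSpace.exp ((-a) • S3) with hV3'd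
  set U2 : Matrix (Fin (2*k+2)) (Fin (2*k+2)) ℂ := NormedSpace.exp (b • S2) with hU2d
  set U2' : Matrix (Fin (2*k+2)) (Fin (2*k+2)) ℂ := NormedSpace.exp ((-b) • S2) with hU2'd
  -- inverses
  have hV3inv : V3 * V3' = 1 ∧ V3' * V3 = 1 := by
    constructor
    · rw [hV3d, hV3'd, ← Matrix.exp_add_of_commute _ _
        (((Commute.refl S3).smul_left _).smul_right _),
        show a • S3 + (-a) • S3 = (0:ℂ) • S3 by module, zero_smul, NormedSpace.exp_zero]
    · rw [hV3d, hV3'd, ← Matrix.exp_add_of_commute _ _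
        (((Commute.refl S3).smul_left _).smul_right _),
        show (-a) • S3 + a • S3 = (0:ℂ) • S3 by module, zero_smul, NormedSpace.exp_zero]
  have hU2inv : U2 * U2' = 1 ∧ U2' * U2 = 1 := by
    constructor
    · rw [hU2d, hU2'd, ← Matrix.exp_add_of_commute _ _
        (((Commute.refl S2).smul_left _).smul_right _),
        show b • S2 + (-b) • S2 = (0:ℂ) • S2 by module, zero_smul, NormedSpace.exp_zero]
    · rw [hU2d, hU2'd, ← Matrix.exp_add_of_commute _ _
        (((Commute.refl S2).smul_left _).smul_right _),
        show (-b) • S2 + b • S2 = (0:ℂ) • S2 by module, zero_smul, NormedSpace.exp_zero]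
  -- conjugation relations
  have hV3Sp : V3 * Sp = -(Sp * V3) := by
    have h := exp_smul_mul_of_bracket a 1 S3 Sp h3 hbr_p
    rw [hexp_a1, neg_one_smul] at h
    exact h
  have hV3Sm : V3 * Sm = -(Sm * V3) := by
    have h := exp_smul_mul_of_bracket a (-1) S3 Sm h3 hbr_m
    rw [hexp_am1, neg_one_smul] at h
    exact h
  have hV3S2 : V3 * S2 = -(S2 * V3) := by
    have hsub : V3 * Sp - V3 * Sm = -(Sp * V3) - -(Sm * V3) := by rw [hV3Sp, hV3Sm]
    have hSpSm : Sp - Sm = (2 * Complex.I) • S2 := by rw [hSp, hSm]; module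
    have hL : V3 * Sp - V3 * Sm = (2 * Complex.I) • (V3 * S2) := by
      rw [← mul_sub, hSpSm, mul_smul_comm]
    have hR : -(Sp * V3) - -(Sm * V3) = (2 * Complex.I) • (-(S2 * V3)) := by
      rw [sub_neg_eq_add, neg_add_eq_sub, ← neg_sub (Sp * V3) (Sm * V3), ← sub_mul, hSpSm,
        smul_mul_assoc, ← smul_neg]
    rw [hL, hR] at hsub
    exact smul_right_injective _ (by simp [Complex.I_ne_zero] : (2 * Complex.I) ≠ 0) hsub
  have hU2Cp : U2 * Cp = (-Complex.I) • (Cp * U2) := by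
    have h := exp_smul_mul_of_bracket b 1 S2 Cp h2 hbr_cp
    rw [hexp_b1] at h
    exact h
  have hU2Cm : U2 * Cm = Complex.I • (Cm * U2) := by
    have h := exp_smul_mul_of_bracket b (-1) S2 Cm h2 hbr_cm
    rw [hexp_bm1] at h
    exact h
  have hU2S3 : U2 * S3 = S1 * U2 := by
    have hsum : U2 * ((2:ℂ) • S3) = (2:ℂ) • (S1 * U2) := by
      have e : (2:ℂ) • S3 = Cp + Cm := by rw [hCp, hCm]; module
      rw [e, mul_add, hU2Cp, hU2Cm]
      have f1 : Cp * U2 = S3 * U2 + Complex.I • (S1 * U2) := by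
        rw [hCp, add_mul, smul_mul_assoc]
      have f2 : Cm * U2 = S3 * U2 - Complex.I • (S1 * U2) := by
        rw [hCm, sub_mul, smul_mul_assoc]
      rw [f1, f2]
      match_scalars <;> simp [Complex.I_mul_I] <;> ring
    have : (2:ℂ) • (U2 * S3) = (2:ℂ) • (S1 * U2) := by rw [← mul_smul_comm, hsum]
    exact smul_right_injective _ (two_ne_zero) this
  -- V1 = U2 V3 U2'
  have hS1conj : a • S1 = U2 * (a • S3) * U2' := by
    have hS1 : S1 = U2 * S3 * U2' := by
      calc S1 = S1 * (U2 * U2') := by rw [hU2inv.1, mul_one]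
        _ = (S1 * U2) * U2' := by rw [mul_assoc]
        _ = (U2 * S3) * U2' := by rw [hU2S3]
        _ = U2 * S3 * U2' := rfl
    rw [hS1, mul_smul_comm, smul_mul_assoc]
  have hV1 : V1 = U2 * V3 * U2' := by
    rw [hV1d, hS1conj]
    exact Matrix.exp_units_conj (⟨U2, U2', hU2inv.1, hU2inv.2⟩ : (Matrix (Fin (2*k+2)) (Fin (2*k+2)) ℂ)ˣ)
      (a • S3)
  -- V2 = U2 * U2
  have hV2 : V2 = U2 * U2 := by
    rw [hV2d, hU2d, ← Matrix.exp_add_of_commute _ _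
      (((Commute.refl S2).smul_left _).smul_right _)]
    congr 1
    rw [← add_smul]
    congr 1
    rw [hb]; ring
  -- V3 U2 = U2' V3
  have hV3U2 : V3 * U2 = U2' * V3 := by
    have hconj : V3 * (b • S2) * V3' = (-b) • S2 := by
      have h0 : V3 * S2 * V3' = -S2 := by
        rw [hV3S2, neg_mul, mul_assoc, hV3inv.1, mul_one]
      calc V3 * (b • S2) * V3' = b • (V3 * S2 * V3') := by
            rw [mul_smul_comm, smul_mul_assoc]
        _ = b • (-S2) := by rw [h0]
        _ = (-b) • S2 := by module
    have hexpconj : U2' = V3 * U2 * V3' := by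
      rw [hU2'd, ← hconj, hU2d]
      exact Matrix.exp_units_conj (⟨V3, V3', hV3inv.1, hV3inv.2⟩ : (Matrix (Fin (2*k+2)) (Fin (2*k+2)) ℂ)ˣ)
        (b • S2)
    rw [hexpconj, mul_assoc, hV3inv.2, mul_one]
  -- V3 * V3 = -1
  have hV3V3 : V3 * V3 = -1 := by
    set u := (Matrix.IsHermitian.eigenvectorUnitary h3 : Matrix (Fin (2*k+2)) (Fin (2*k+2)) ℂ) with hu
    have huv : u * star u = 1 :=
      Matrix.mem_unitaryGroup_iff.mp (Matrix.IsHermitian.eigenvectorUnitary h3).2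
    have hvu : star u * u = 1 :=
      Matrix.mem_unitaryGroup_iff'.mp (Matrix.IsHermitian.eigenvectorUnitary h3).2
    have hsp : S3 = u * diagonal (fun i => ((h3.eigenvalues i : ℝ) : ℂ)) * star u :=
      h3.spectral_theorem
    have hsmul : (2*a) • S3 = u * diagonal (fun i => (2*a) * ((h3.eigenvalues i : ℝ) : ℂ)) * star u := by
      have h0 := congrArg (fun X => (2*a) • X) hsp
      rw [h0, show diagonal (fun i => (2*a) * ((h3.eigenvalues i : ℝ) : ℂ))
          = (2*a) • diagonal (fun i => ((h3.eigenvalues i : ℝ) : ℂ)) by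
        rw [← Matrix.diagonal_smul]; congr 1, Matrix.mul_smul, Matrix.smul_mul]
    have hadd : V3 * V3 = NormedSpace.exp ((2*a) • S3) := by
      rw [hV3d, ← Matrix.exp_add_of_commute _ _
        (((Commute.refl S3).smul_left _).smul_right _)]
      congr 1
      module
    rw [hadd, hsmul, exp_conj_diag u (star u) _ huv hvu]
    have hdiagval : (fun i => Complex.exp ((2*a) * ((h3.eigenvalues i : ℝ) : ℂ)))
        = fun _ => (-1 : ℂ) := by
      funext i
      obtain ⟨m, hm⟩ := heig i
      have harg : (2*a) * ((h3.eigenvalues i : ℝ) : ℂ)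
          = ((-m : ℤ) : ℂ) * (2 * (Real.pi:ℂ) * Complex.I) + -((Real.pi:ℂ) * Complex.I) := by
        rw [hm, ha]; push_cast; ring
      rw [harg, Complex.exp_add, Complex.exp_int_mul_two_pi_mul_I, one_mul,
        Complex.exp_neg, Complex.exp_pi_mul_I]
      norm_num
    rw [hdiagval]
    have : diagonal (fun _ : Fin (2*k+2) => (-1:ℂ)) = -1 := by
      ext i j
      rcases eq_or_ne i j with rfl | hij
      · simp
      · simp [Matrix.diagonal_apply_ne _ hij, Matrix.one_apply_ne hij]
    rw [this, Matrix.mul_neg, Matrix.mul_one, Matrix.neg_mul, huv]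
  -- final assembly
  calc V1 * V2 * V3 = (U2 * V3 * U2') * (U2 * U2) * V3 := by rw [hV1, hV2]
    _ = U2 * V3 * (U2' * U2) * U2 * V3 := by simp only [mul_assoc]
    _ = U2 * (V3 * U2) * V3 := by rw [hU2inv.2]; simp only [mul_one, mul_assoc]
    _ = U2 * (U2' * V3) * V3 := by rw [hV3U2]
    _ = (U2 * U2') * (V3 * V3) := by simp only [mul_assoc]
    _ = -1 := by rw [hU2inv.1, hV3V3, one_mul]
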